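/- arXiv:2104.07285 — 2 statements merged into one kernel-verified Lean document; each statement's English description precedes it below -/
import Mathlib

section
/- For every m ≥ 1 the following two identities hold in PolC_I: Σ_{l=0}^{m} (−1)^l h^{(n)}_{m−l} (Π_{j=2}^{l} κ̃_{1,j}) e^{(n)}_l = 0 and Σ_{l=0}^{m} (−1)^l (Π_{j=2}^{l} κ̃_{1,j}) e^{(n)}_l h^{(n)}_{m−l} = 0, where the product Π_{j=2}^{l} κ̃_{1,j} is the empty product 1 for l ≤ 1 and e^{(n)}_l := 0 for l > n. -/
noncomputable section

/- Context: index set `{1,…,n}` with parity function `p`; the Clifford algebra `C_I` on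
odd generators (`cᵢ := 0` for even `i`) and the polynomial Clifford algebra `PolC k n p`. -/

inductive PolCRel (k : Type) [Field k] (n : ℕ) (p : Fin n → Bool) :
    FreeAlgebra k (Fin n ⊕ Fin n) → FreeAlgebra k (Fin n ⊕ Fin n) → Prop
  | ycomm (i j : Fin n) :
      PolCRel k n p (FreeAlgebra.ι k (Sum.inl i) * FreeAlgebra.ι k (Sum.inl j))
        (FreeAlgebra.ι k (Sum.inl j) * FreeAlgebra.ι k (Sum.inl i))
  | cAnticomm (i j : Fin n) (hij : i ≠ j) :
      PolCRel k n p (FreeAlgebra.ι k (Sum.inr i) * FreeAlgebra.ι k (Sum.inr j))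
        (-(FreeAlgebra.ι k (Sum.inr j) * FreeAlgebra.ι k (Sum.inr i)))
  | cSq (i : Fin n) (h : p i = true) :
      PolCRel k n p (FreeAlgebra.ι k (Sum.inr i) * FreeAlgebra.ι k (Sum.inr i)) 1
  | cZero (i : Fin n) (h : p i = false) :
      PolCRel k n p (FreeAlgebra.ι k (Sum.inr i)) 0
  | ycSame (i : Fin n) :
      PolCRel k n p (FreeAlgebra.ι k (Sum.inl i) * FreeAlgebra.ι k (Sum.inr i))
        (-(FreeAlgebra.ι k (Sum.inr i) * FreeAlgebra.ι k (Sum.inl i)))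
  | ycDiff (i j : Fin n) (hij : i ≠ j) :
      PolCRel k n p (FreeAlgebra.ι k (Sum.inl i) * FreeAlgebra.ι k (Sum.inr j))
        (FreeAlgebra.ι k (Sum.inr j) * FreeAlgebra.ι k (Sum.inl i))

/-- The polynomial Clifford algebra `PolC_I`. -/
abbrev PolC (k : Type) [Field k] (n : ℕ) (p : Fin n → Bool) := RingQuot (PolCRel k n p)

/-- The polynomial generators `yᵢ` (for `i : Fin n`, i.e. 0-based). -/
def Y (k : Type) [Field k] (n : ℕ) (p : Fin n → Bool) (i : Fin n) : PolC k n p :=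
  RingQuot.mkAlgHom k (PolCRel k n p) (FreeAlgebra.ι k (Sum.inl i))

/-- The Clifford generators `cᵢ` (for `i : Fin n`; this is `0` if `i` is even). -/
def Cc (k : Type) [Field k] (n : ℕ) (p : Fin n → Bool) (i : Fin n) : PolC k n p :=
  RingQuot.mkAlgHom k (PolCRel k n p) (FreeAlgebra.ι k (Sum.inr i))

/-- The defining properties of the `i`-th Clifford Demazure operator (`i` is 0-based here,
so this is the paper's `d_{i+1}` acting on `y_{i+1}, y_{i+2}`). -/
def DemSpec (k : Type) [Field k] (n : ℕ) (p : Fin n → Bool) (i : ℕ) (hi : i + 1 < n)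
    (si : PolC k n p →ₐ[k] PolC k n p) (d : PolC k n p →ₗ[k] PolC k n p) : Prop :=
  d 1 = 0 ∧
  d (Y k n p ⟨i, by omega⟩) = -1 - Cc k n p ⟨i, by omega⟩ * Cc k n p ⟨i + 1, hi⟩ ∧
  d (Y k n p ⟨i + 1, hi⟩) = 1 - Cc k n p ⟨i, by omega⟩ * Cc k n p ⟨i + 1, hi⟩ ∧
  (∀ j : Fin n, (j : ℕ) ≠ i → (j : ℕ) ≠ i + 1 → d (Y k n p j) = 0) ∧
  (∀ j : Fin n, d (Cc k n p j) = 0) ∧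
  (∀ f g : PolC k n p, d (f * g) = d f * g + si f * d g)

/-- The property that `si` is the algebra automorphism given by the simple transposition
`sᵢ = (i, i+1)`, permuting the `y`'s and `c`'s simultaneously (0-based `i`). -/
def SwapSpec (k : Type) [Field k] (n : ℕ) (p : Fin n → Bool) (i : ℕ) (hi : i + 1 < n)
    (si : PolC k n p →ₐ[k] PolC k n p) : Prop :=
  ∀ j : Fin n,
    si (Y k n p j) = Y k n p (Equiv.swap ⟨i, by omega⟩ ⟨i + 1, hi⟩ j) ∧
    si (Cc k n p j) = Cc k n p (Equiv.swap ⟨i, by omega⟩ ⟨i + 1, hi⟩ j)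

/-- `γ_{l,l+1}` (1-based index `l`): equal to `c_l` if `l`, `l+1` are both odd,
`1` otherwise; with the convention `γ_{n,n+1} := 1`.  Stated generically for a ring `A`
with distinguished elements `c : Fin n → A`. -/
def gammaUp (A : Type) [Ring A] (n : ℕ) (p : Fin n → Bool) (c : Fin n → A) (l : ℕ) : A :=
  if h : 1 ≤ l ∧ l < n then
    (if p ⟨l - 1, by omega⟩ = true ∧ p ⟨l, h.2⟩ = true then c ⟨l - 1, by omega⟩ else 1)
  else 1

/-- `γ_{l,l-1}` (1-based index `l`): equal to `-c_l` if `l`, `l-1` are both odd,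
`1` otherwise. -/
def gammaDown (A : Type) [Ring A] (n : ℕ) (p : Fin n → Bool) (c : Fin n → A) (l : ℕ) : A :=
  if h : 2 ≤ l ∧ l ≤ n then
    (if p ⟨l - 1, by omega⟩ = true ∧ p ⟨l - 2, by omega⟩ = true then -c ⟨l - 1, by omega⟩
      else 1)
  else 1

/-- `κ_{m,l}` (1-based, `m ≤ l`): `κ_{l,l} = γ_{l,l+1}` and for `m < l`
`κ_{m,l} = (γ_{m+1,m}γ_{m+1,m+2})⋯(γ_{l-1,l-2}γ_{l-1,l})·γ_{l,l-1}`. -/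
def kappa (A : Type) [Ring A] (n : ℕ) (p : Fin n → Bool) (c : Fin n → A) (m l : ℕ) : A :=
  if m = l then gammaUp A n p c l
  else
    ((List.range (l - 1 - m)).map
        (fun t => gammaDown A n p c (m + 1 + t) * gammaUp A n p c (m + 1 + t))).prod *
      gammaDown A n p c l

/-- `κ̃_{m,l} := κ_{m,l} · γ_{l,l+1}`. -/
def kappaT (A : Type) [Ring A] (n : ℕ) (p : Fin n → Bool) (c : Fin n → A) (m l : ℕ) : A :=
  kappa A n p c m l * gammaUp A n p c l

/-- The variable `y_l` with 1-based index `l` (zero outside `1 ≤ l ≤ n`). -/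
def Yn (k : Type) [Field k] (n : ℕ) (p : Fin n → Bool) (l : ℕ) : PolC k n p :=
  if h : 1 ≤ l ∧ l ≤ n then Y k n p ⟨l - 1, by omega⟩ else 0

/-- The elementary `𝔡`-symmetric polynomials `e^{(kk)}_m`, defined recursively by
`e^{(kk)}_0 = 1`, `e^{(0)}_m = 0` for `m ≥ 1`, and
`e^{(kk)}_m = e^{(kk-1)}_m + e^{(kk-1)}_{m-1} κ_{m,kk} y_kk`. -/
def esym (k : Type) [Field k] (n : ℕ) (p : Fin n → Bool) : ℕ → ℕ → PolC k n p
  | _, 0 => 1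
  | 0, _ + 1 => 0
  | kk + 1, m + 1 =>
      esym k n p kk (m + 1) +
        esym k n p kk m *
          (kappa (PolC k n p) n p (Cc k n p) (m + 1) (kk + 1) * Yn k n p (kk + 1))

/-- The matrix `M_{(n)}`: first column `((-1)^{l-1} e^{(n)}_l)_l`, superdiagonal entries
`κ̃_{1,l+1}`, all other entries `0`. -/
def Mmat (k : Type) [Field k] (n : ℕ) (p : Fin n → Bool) : Matrix (Fin n) (Fin n) (PolC k n p) :=
  fun i j =>
    if (j : ℕ) = 0 then (-1 : PolC k n p) ^ (i : ℕ) * esym k n p n ((i : ℕ) + 1)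
    else if (j : ℕ) = (i : ℕ) + 1 then kappaT (PolC k n p) n p (Cc k n p) 1 ((i : ℕ) + 2)
    else 0

/-- The complete symmetric polynomial `h^{(n)}_m`: the `(1,1)` entry of `M_{(n)}^m`. -/
def hsym (k : Type) [Field k] (n : ℕ) (p : Fin n → Bool) (m : ℕ) : PolC k n p :=
  if h : 0 < n then (Mmat k n p ^ m) ⟨0, h⟩ ⟨0, h⟩ else 0


namespace CVEAux

variable (k : Type) [Field k] (n : ℕ) (p : Fin n → Bool)

/-- `K t := κ̃_{1,t+2}` (the superdiagonal entries of `M`). -/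
def K (t : ℕ) : PolC k n p := kappaT (PolC k n p) n p (Cc k n p) 1 (t + 2)

/-- `P l := κ̃_{1,2} ⋯ κ̃_{1,l+1}`. -/
def P (l : ℕ) : PolC k n p := ((List.range l).map (K k n p)).prod

theorem neg_one_pow_comm (x : PolC k n p) (l : ℕ) :
    (-1 : PolC k n p) ^ l * x = x * (-1 : PolC k n p) ^ l :=
  ((Commute.neg_one_left x).pow_left l).eq

theorem esym_zero (kk : ℕ) : esym k n p kk 0 = 1 := by cases kk <;> rfl

theorem esym_eq_zero : ∀ kk m, kk < m → esym k n p kk m = 0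
  | 0, m + 1, _ => rfl
  | kk + 1, m + 1, h => by
    rw [esym, esym_eq_zero kk (m + 1) (by omega), esym_eq_zero kk m (by omega)]
    simp

theorem hsym_eq (hn : 0 < n) (m : ℕ) :
    hsym k n p m = (Mmat k n p ^ m) ⟨0, hn⟩ ⟨0, hn⟩ := by
  rw [hsym, dif_pos hn]

theorem hsym_zero (hn : 0 < n) : hsym k n p 0 = 1 := by
  rw [hsym_eq k n p hn, pow_zero, Matrix.one_apply_eq]

theorem row_lemma (hn : 0 < n) :
    ∀ m (j : Fin n), (Mmat k n p ^ m) ⟨0, hn⟩ j =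
      if (j : ℕ) ≤ m then hsym k n p (m - (j : ℕ)) * P k n p (j : ℕ) else 0 := by
  intro m
  induction m with
  | zero =>
    intro j
    rw [pow_zero]
    rcases eq_or_ne (j : ℕ) 0 with h0 | h0
    · have : j = ⟨0, hn⟩ := by ext; exact h0
      subst this
      simp [Matrix.one_apply_eq, hsym_zero k n p hn, P]
    · rw [Matrix.one_apply_ne' (by simp [Fin.ext_iff]; omega), if_neg (by omega)]
  | succ m ih =>
    intro j
    rcases eq_or_ne (j : ℕ) 0 with h0 | h0
    · have : j = ⟨0, hn⟩ := by ext; exact h0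
      subst this
      rw [if_pos (by omega)]
      simp [← hsym_eq k n p hn, P]
    · obtain ⟨t0, ht0⟩ : ∃ t0, (j : ℕ) = t0 + 1 := ⟨(j : ℕ) - 1, by omega⟩
      have ht0n : t0 < n := by omega
      rw [pow_succ, Matrix.mul_apply]
      rw [Finset.sum_eq_single (⟨t0, ht0n⟩ : Fin n)]
      · rw [ih ⟨t0, ht0n⟩]
        have hMm : Mmat k n p ⟨t0, ht0n⟩ j = K k n p t0 := by
          rw [Mmat]; rw [if_neg h0, if_pos (by simpa using ht0)]; rfl
        rw [hMm]
        simp only [Fin.val_mk]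
        rw [ht0]
        rcases le_or_gt t0 m with hle | hlt
        · rw [if_pos hle, if_pos (by omega)]
          have hP : P k n p (t0 + 1) = P k n p t0 * K k n p t0 := by
            rw [P, P, List.range_succ, List.map_append, List.prod_append]
            simp
          have hidx : m + 1 - (t0 + 1) = m - t0 := by omega
          rw [hP, hidx, mul_assoc]
        · rw [if_neg (by omega), if_neg (by omega), zero_mul]
      · intro t _ htne
        have : Mmat k n p t j = 0 := by
          rw [Mmat, if_neg h0, if_neg]
          intro hc
          exact htne (by ext; simp only [Fin.val_mk]; omega)
        rw [this, mul_zero]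
      · intro h; exact absurd (Finset.mem_univ _) h
  
theorem h_rec (hn : 0 < n) (m : ℕ) :
    hsym k n p (m + 1) = ∑ j ∈ Finset.range (m + 1),
      hsym k n p (m - j) * P k n p j * ((-1 : PolC k n p) ^ j * esym k n p n (j + 1)) := by
  have step : hsym k n p (m + 1) =
      ∑ t : Fin n, (if (t : ℕ) ≤ m then
        hsym k n p (m - (t : ℕ)) * P k n p (t : ℕ) *
          ((-1 : PolC k n p) ^ (t : ℕ) * esym k n p n ((t : ℕ) + 1)) else 0) := by
    rw [hsym_eq k n p hn, pow_succ, Matrix.mul_apply]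
    refine Finset.sum_congr rfl fun t _ => ?_
    rw [row_lemma k n p hn m t]
    have : Mmat k n p t ⟨0, hn⟩ =
        (-1 : PolC k n p) ^ (t : ℕ) * esym k n p n ((t : ℕ) + 1) := by
      rw [Mmat, if_pos rfl]
    rw [this]
    split <;> simp [mul_assoc]
  rw [step, Fin.sum_univ_eq_sum_range
    (fun t => if t ≤ m then hsym k n p (m - t) * P k n p t *
      ((-1 : PolC k n p) ^ t * esym k n p n (t + 1)) else 0) n]
  have h1 : ∑ t ∈ Finset.range n, (if t ≤ m then hsym k n p (m - t) * P k n p t *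
        ((-1 : PolC k n p) ^ t * esym k n p n (t + 1)) else 0) =
      ∑ t ∈ Finset.range (max n (m + 1)), (if t ≤ m then hsym k n p (m - t) * P k n p t *
        ((-1 : PolC k n p) ^ t * esym k n p n (t + 1)) else 0) := by
    refine Finset.sum_subset (Finset.range_subset_range.2 (le_max_left _ _)) ?_
    intro t ht hnt
    simp only [Finset.mem_range] at ht hnt
    rcases le_or_gt t m with h | h
    · rw [if_pos h, esym_eq_zero k n p n (t + 1) (by omega)]
      simp
    · rw [if_neg (by omega)]
  have h2 : ∑ t ∈ Finset.range (m + 1), (if t ≤ m then hsym k n p (m - t) * P k n p t *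
        ((-1 : PolC k n p) ^ t * esym k n p n (t + 1)) else 0) =
      ∑ t ∈ Finset.range (max n (m + 1)), (if t ≤ m then hsym k n p (m - t) * P k n p t *
        ((-1 : PolC k n p) ^ t * esym k n p n (t + 1)) else 0) := by
    refine Finset.sum_subset (Finset.range_subset_range.2 (le_max_right _ _)) ?_
    intro t ht hnt
    simp only [Finset.mem_range] at ht hnt
    rw [if_neg (by omega)]
  rw [h1, ← h2]
  refine Finset.sum_congr rfl fun t ht => ?_
  simp only [Finset.mem_range] at ht
  rw [if_pos (by omega)]

theorem col_lemma (hn : 0 < n) :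
    ∀ m (i : Fin n), (Mmat k n p ^ (m + 1)) i ⟨0, hn⟩ =
      ∑ j ∈ Finset.range (m + 1),
        ((List.range j).map (fun t => K k n p ((i : ℕ) + t))).prod *
          ((-1 : PolC k n p) ^ ((i : ℕ) + j) * esym k n p n ((i : ℕ) + j + 1) *
            hsym k n p (m - j)) := by
  intro m
  induction m with
  | zero =>
    intro i
    rw [pow_one]
    simp [Mmat, hsym_zero k n p hn]
  | succ m ih =>
    intro i
    rw [pow_succ', Matrix.mul_apply]
    rcases lt_or_ge ((i : ℕ) + 1) n with hi | hi
    · have key : ∀ t : Fin n, Mmat k n p i t * (Mmat k n p ^ (m + 1)) t ⟨0, hn⟩ =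
          (if t = ⟨0, hn⟩ then
            ((-1 : PolC k n p) ^ (i : ℕ) * esym k n p n ((i : ℕ) + 1)) *
              (Mmat k n p ^ (m + 1)) t ⟨0, hn⟩ else 0) +
          (if t = ⟨(i : ℕ) + 1, hi⟩ then
            K k n p (i : ℕ) * (Mmat k n p ^ (m + 1)) t ⟨0, hn⟩ else 0) := by
        intro t
        rcases eq_or_ne t ⟨0, hn⟩ with rfl | ht0
        · rw [if_pos rfl, if_neg (by simp [Fin.ext_iff]), add_zero, Mmat, if_pos rfl]
        · rcases eq_or_ne t ⟨(i : ℕ) + 1, hi⟩ with rfl | hti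
          · rw [if_neg ht0, if_pos rfl, zero_add, Mmat, if_neg (by simp),
              if_pos (by simp)]
            rfl
          · have ht0' : (t : ℕ) ≠ 0 := fun hc => ht0 (Fin.ext hc)
            have hti' : (t : ℕ) ≠ (i : ℕ) + 1 := fun hc => hti (Fin.ext hc)
            rw [if_neg ht0, if_neg hti, Mmat, if_neg ht0', if_neg hti', zero_mul,
              add_zero]
      rw [Finset.sum_congr rfl fun t _ => key t, Finset.sum_add_distrib,
        Finset.sum_ite_eq' Finset.univ, Finset.sum_ite_eq' Finset.univ,
        if_pos (Finset.mem_univ _), if_pos (Finset.mem_univ _),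
        ← hsym_eq k n p hn, ih ⟨(i : ℕ) + 1, hi⟩, Finset.mul_sum]
      simp only [Fin.val_mk]
      conv_rhs => rw [Finset.sum_range_succ']
      have hterm0 : ((List.range 0).map (fun t => K k n p ((i : ℕ) + t))).prod *
          ((-1 : PolC k n p) ^ ((i : ℕ) + 0) * esym k n p n ((i : ℕ) + 0 + 1) *
            hsym k n p (m + 1 - 0)) =
          (-1 : PolC k n p) ^ (i : ℕ) * esym k n p n ((i : ℕ) + 1) *
            hsym k n p (m + 1) := by
        simp
      rw [hterm0, add_comm]
      congr 1
      refine Finset.sum_congr rfl fun j hj => ?_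
      have hP : ((List.range (j + 1)).map (fun t => K k n p ((i : ℕ) + t))).prod =
          K k n p (i : ℕ) *
            ((List.range j).map (fun t => K k n p ((i : ℕ) + 1 + t))).prod := by
        rw [List.range_succ_eq_map, List.map_cons, List.prod_cons, List.map_map]
        have hfun : ((fun t => K k n p ((i : ℕ) + t)) ∘ Nat.succ) =
            fun t => K k n p ((i : ℕ) + 1 + t) := by
          funext t
          simp only [Function.comp_apply]
          congr 1
          omega
        rw [hfun, Nat.add_zero]
      have hexp2 : (i : ℕ) + (j + 1) + 1 = (i : ℕ) + 1 + j + 1 := by omega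
      have hexp : (i : ℕ) + (j + 1) = (i : ℕ) + 1 + j := by omega
      have hexp3 : m + 1 - (j + 1) = m - j := by omega
      rw [hP, hexp2, hexp, hexp3]
      simp only [mul_assoc]
    · -- i = n - 1 : only the t = 0 term survives
      have key : ∀ t : Fin n, Mmat k n p i t * (Mmat k n p ^ (m + 1)) t ⟨0, hn⟩ =
          (if t = ⟨0, hn⟩ then
            ((-1 : PolC k n p) ^ (i : ℕ) * esym k n p n ((i : ℕ) + 1)) *
              (Mmat k n p ^ (m + 1)) t ⟨0, hn⟩ else 0) := by
        intro t
        rcases eq_or_ne t ⟨0, hn⟩ with rfl | ht0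
        · rw [if_pos rfl, Mmat, if_pos rfl]
        · have ht0' : (t : ℕ) ≠ 0 := fun hc => ht0 (Fin.ext hc)
          rw [if_neg ht0, Mmat, if_neg ht0',
            if_neg (by have := t.isLt; omega), zero_mul]
      rw [Finset.sum_congr rfl fun t _ => key t, Finset.sum_ite_eq' Finset.univ,
        if_pos (Finset.mem_univ _), ← hsym_eq k n p hn, Finset.sum_range_succ']
      have : ∀ j ∈ Finset.range (m + 1),
          ((List.range (j + 1)).map (fun t => K k n p ((i : ℕ) + t))).prod *
            ((-1 : PolC k n p) ^ ((i : ℕ) + (j + 1)) *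
              esym k n p n ((i : ℕ) + (j + 1) + 1) * hsym k n p (m + 1 - (j + 1))) = 0 := by
        intro j _
        rw [esym_eq_zero k n p n ((i : ℕ) + (j + 1) + 1) (by omega)]
        simp
      rw [Finset.sum_congr rfl this]
      simp

theorem h_rec' (hn : 0 < n) (m : ℕ) :
    hsym k n p (m + 1) = ∑ j ∈ Finset.range (m + 1),
      P k n p j * ((-1 : PolC k n p) ^ j * esym k n p n (j + 1) * hsym k n p (m - j)) := by
  rw [hsym_eq k n p hn, col_lemma k n p hn m ⟨0, hn⟩]
  refine Finset.sum_congr rfl fun j hj => ?_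
  simp only [Nat.zero_add]
  rfl

end CVEAux

/-- for every `m ≥ 1`,
`Σ_{l=0}^{m} (−1)^l h^{(n)}_{m−l} (Π_{j=2}^{l} κ̃_{1,j}) e^{(n)}_l = 0` and
`Σ_{l=0}^{m} (−1)^l (Π_{j=2}^{l} κ̃_{1,j}) e^{(n)}_l h^{(n)}_{m−l} = 0` in `PolC_I`. -/
theorem complete_vs_elementary_vanishing (k : Type) [Field k] (n : ℕ) (p : Fin n → Bool)
    (hn : 2 ≤ n) (m : ℕ) (hm : 1 ≤ m) :
    (∑ l ∈ Finset.range (m + 1),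
        (-1 : PolC k n p) ^ l * hsym k n p (m - l) *
          ((List.range (l - 1)).map (fun t => kappaT (PolC k n p) n p (Cc k n p) 1 (t + 2))).prod *
          esym k n p n l) = 0 ∧
    (∑ l ∈ Finset.range (m + 1),
        (-1 : PolC k n p) ^ l *
          ((List.range (l - 1)).map (fun t => kappaT (PolC k n p) n p (Cc k n p) 1 (t + 2))).prod *
          esym k n p n l * hsym k n p (m - l)) = 0 := by
  obtain ⟨m', rfl⟩ : ∃ m', m = m' + 1 := ⟨m - 1, by omega⟩
  have hn0 : 0 < n := by omega
  constructor
  · rw [Finset.sum_range_succ']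
    have h0 : (-1 : PolC k n p) ^ 0 * hsym k n p (m' + 1 - 0) *
        ((List.range (0 - 1)).map
          (fun t => kappaT (PolC k n p) n p (Cc k n p) 1 (t + 2))).prod *
        esym k n p n 0 = hsym k n p (m' + 1) := by
      rw [CVEAux.esym_zero]
      simp
    rw [h0]
    have hmain : ∀ l ∈ Finset.range (m' + 1),
        (-1 : PolC k n p) ^ (l + 1) * hsym k n p (m' + 1 - (l + 1)) *
          ((List.range (l + 1 - 1)).map
            (fun t => kappaT (PolC k n p) n p (Cc k n p) 1 (t + 2))).prod *
          esym k n p n (l + 1) =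
        -(hsym k n p (m' - l) * CVEAux.P k n p l *
          ((-1 : PolC k n p) ^ l * esym k n p n (l + 1))) := by
      intro l _
      have h1 : m' + 1 - (l + 1) = m' - l := by omega
      have h2 : l + 1 - 1 = l := by omega
      have hPdef : ((List.range l).map
          (fun t => kappaT (PolC k n p) n p (Cc k n p) 1 (t + 2))).prod =
          CVEAux.P k n p l := rfl
      have hc : (-1 : PolC k n p) ^ l * (hsym k n p (m' - l) * CVEAux.P k n p l) =
          hsym k n p (m' - l) * CVEAux.P k n p l * (-1 : PolC k n p) ^ l :=
        CVEAux.neg_one_pow_comm k n p _ l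
      have hpow : (-1 : PolC k n p) ^ (l + 1) = -(-1 : PolC k n p) ^ l := by
        rw [pow_succ]
        exact mul_neg_one ((-1 : PolC k n p) ^ l)
      have hneg : ∀ a b : PolC k n p, -a * b = -(a * b) := fun a b => neg_mul a b
      have hninj : ∀ a b : PolC k n p, (-a = -b) ↔ a = b := fun a b => neg_inj
      rw [h1, h2, hPdef, hpow, hneg, hneg, hneg, hninj,
        mul_assoc ((-1 : PolC k n p) ^ l) (hsym k n p (m' - l)) (CVEAux.P k n p l),
        hc, mul_assoc]
    have hsum2 : ∑ x ∈ Finset.range (m' + 1),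
        -(hsym k n p (m' - x) * CVEAux.P k n p x *
          ((-1 : PolC k n p) ^ x * esym k n p n (x + 1))) =
        -∑ x ∈ Finset.range (m' + 1),
          hsym k n p (m' - x) * CVEAux.P k n p x *
            ((-1 : PolC k n p) ^ x * esym k n p n (x + 1)) := Finset.sum_neg_distrib _
    rw [Finset.sum_congr rfl hmain, hsum2, ← CVEAux.h_rec k n p hn0 m']
    exact neg_add_cancel _
  · rw [Finset.sum_range_succ']
    have h0 : (-1 : PolC k n p) ^ 0 *
        ((List.range (0 - 1)).map
          (fun t => kappaT (PolC k n p) n p (Cc k n p) 1 (t + 2))).prod *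
        esym k n p n 0 * hsym k n p (m' + 1 - 0) = hsym k n p (m' + 1) := by
      rw [CVEAux.esym_zero]
      simp
    rw [h0]
    have hmain : ∀ l ∈ Finset.range (m' + 1),
        (-1 : PolC k n p) ^ (l + 1) *
          ((List.range (l + 1 - 1)).map
            (fun t => kappaT (PolC k n p) n p (Cc k n p) 1 (t + 2))).prod *
          esym k n p n (l + 1) * hsym k n p (m' + 1 - (l + 1)) =
        -(CVEAux.P k n p l *
          ((-1 : PolC k n p) ^ l * esym k n p n (l + 1) * hsym k n p (m' - l))) := by
      intro l _
      have h1 : m' + 1 - (l + 1) = m' - l := by omega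
      have h2 : l + 1 - 1 = l := by omega
      rw [h1, h2]
      have hPdef : ((List.range l).map
          (fun t => kappaT (PolC k n p) n p (Cc k n p) 1 (t + 2))).prod =
          CVEAux.P k n p l := rfl
      rw [hPdef]
      have hc : (-1 : PolC k n p) ^ l * CVEAux.P k n p l =
          CVEAux.P k n p l * (-1 : PolC k n p) ^ l :=
        CVEAux.neg_one_pow_comm k n p _ l
      have hpow : (-1 : PolC k n p) ^ (l + 1) = -(-1 : PolC k n p) ^ l := by
        rw [pow_succ]
        exact mul_neg_one ((-1 : PolC k n p) ^ l)
      have hneg : ∀ a b : PolC k n p, -a * b = -(a * b) := fun a b => neg_mul a b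
      have hninj : ∀ a b : PolC k n p, (-a = -b) ↔ a = b := fun a b => neg_inj
      rw [hpow, hneg, hneg, hneg, hninj, hc,
        mul_assoc (CVEAux.P k n p l), mul_assoc (CVEAux.P k n p l)]
    have hsum2 : ∑ x ∈ Finset.range (m' + 1),
        -(CVEAux.P k n p x *
          ((-1 : PolC k n p) ^ x * esym k n p n (x + 1) * hsym k n p (m' - x))) =
        -∑ x ∈ Finset.range (m' + 1),
          CVEAux.P k n p x *
            ((-1 : PolC k n p) ^ x * esym k n p n (x + 1) * hsym k n p (m' - x)) :=
      Finset.sum_neg_distrib _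
    rw [Finset.sum_congr rfl hmain, hsum2, ← CVEAux.h_rec' k n p hn0 m']
    exact neg_add_cancel _

end
end

section
/- If v, w ∈ S_n satisfy ℓ(w) = ℓ(w v^{−1}) + ℓ(v) (where ℓ denotes Coxeter length), then d_v(s_w) = s_{w v^{−1}}; that is, applying the divided-difference operator d_v to the d-Schubert polynomial s_w yields the d-Schubert polynomial of w v^{−1}. -/
noncomputable section

/-- The Coxeter length of a permutation of `Fin n` (= its number of inversions). -/
def len (n : ℕ) (w : Equiv.Perm (Fin n)) : ℕ :=
  (Finset.univ.filter fun x : Fin n × Fin n => x.1 < x.2 ∧ w x.2 < w x.1).card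

/-- The staircase monomial `y₁^{n-1} y₂^{n-2} ⋯ y_{n-1}` (0-based: `Y i` has exponent
`n - 1 - i`). -/
def staircase (k : Type) [Field k] (n : ℕ) (p : Fin n → Bool) : PolC k n p :=
  ((List.finRange n).map (fun i => Y k n p i ^ (n - 1 - (i : ℕ)))).prod

/-- The hypothesis that `D` assigns to each `w ∈ S_n` the operator `d_w = d_{i₁} ∘ ⋯ ∘ d_{i_r}`
for a reduced expression `w = s_{i₁} ⋯ s_{i_r}`: equivalently, `D 1 = id`, `D sᵢ = dᵢ`, and
`D` is multiplicative on length-additive products. -/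
def DFamSpec (k : Type) [Field k] (n : ℕ) (p : Fin n → Bool)
    (d : ∀ i : ℕ, i + 1 < n → (PolC k n p →ₗ[k] PolC k n p))
    (D : Equiv.Perm (Fin n) → (PolC k n p →ₗ[k] PolC k n p)) : Prop :=
  D 1 = LinearMap.id ∧
  (∀ (i : ℕ) (hi : i + 1 < n), D (Equiv.swap ⟨i, by omega⟩ ⟨i + 1, hi⟩) = d i hi) ∧
  (∀ u v : Equiv.Perm (Fin n), len n (u * v) = len n u + len n v →
    D (u * v) = (D u).comp (D v))

/-- The `𝔡`-Schubert polynomial `𝔰_w = 𝔡_{w⁻¹ w₀}(y₁^{n-1} ⋯ y_{n-1})`, where `w₀` is the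
longest element of `S_n`. -/
def schubert (k : Type) [Field k] (n : ℕ) (p : Fin n → Bool)
    (D : Equiv.Perm (Fin n) → (PolC k n p →ₗ[k] PolC k n p)) (w : Equiv.Perm (Fin n)) :
    PolC k n p :=
  D (w⁻¹ * Fin.revPerm) (staircase k n p)

lemma len_inv_eq (n : ℕ) (u : Equiv.Perm (Fin n)) : len n u⁻¹ = len n u := by
  unfold len
  refine Finset.card_nbij' (fun x => (u⁻¹ x.2, u⁻¹ x.1)) (fun x => (u x.2, u x.1)) ?_ ?_ ?_ ?_
  · intro x h; obtain ⟨a, b⟩ := x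
    simp only [Finset.coe_filter, Set.mem_setOf_eq, Finset.mem_coe, Finset.mem_filter, Finset.mem_univ, true_and] at h ⊢
    simpa using ⟨h.2, h.1⟩
  · intro x h; obtain ⟨a, b⟩ := x
    simp only [Finset.coe_filter, Set.mem_setOf_eq, Finset.mem_coe, Finset.mem_filter, Finset.mem_univ, true_and] at h ⊢
    simpa using ⟨h.2, h.1⟩
  · rintro ⟨a, b⟩ _; simp
  · rintro ⟨a, b⟩ _; simp

lemma len_add_len_mul_rev (n : ℕ) (u : Equiv.Perm (Fin n)) :
    len n (u * Fin.revPerm) + len n u = len n (Fin.revPerm : Equiv.Perm (Fin n)) := by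
  unfold len
  have h1 : (Finset.univ.filter fun x : Fin n × Fin n =>
      x.1 < x.2 ∧ (u * Fin.revPerm : Equiv.Perm (Fin n)) x.2 <
        (u * Fin.revPerm : Equiv.Perm (Fin n)) x.1).card =
      (Finset.univ.filter fun x : Fin n × Fin n =>
      x.1 < x.2 ∧ u x.1 < u x.2).card := by
    refine Finset.card_nbij' (fun x => (Fin.revPerm x.2, Fin.revPerm x.1))
      (fun x => (Fin.revPerm x.2, Fin.revPerm x.1)) ?_ ?_ ?_ ?_
    · intro x h; obtain ⟨a, b⟩ := x
      simp only [Finset.coe_filter, Set.mem_setOf_eq, Finset.mem_coe, Finset.mem_filter, Finset.mem_univ, true_and, Equiv.Perm.mul_apply,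
        Fin.revPerm_apply] at h ⊢
      exact ⟨Fin.rev_lt_rev.mpr h.1, h.2⟩
    · intro x h; obtain ⟨a, b⟩ := x
      simp only [Finset.coe_filter, Set.mem_setOf_eq, Finset.mem_coe, Finset.mem_filter, Finset.mem_univ, true_and, Equiv.Perm.mul_apply,
        Fin.revPerm_apply] at h ⊢
      refine ⟨Fin.rev_lt_rev.mpr h.1, ?_⟩
      simpa using h.2
    · rintro ⟨a, b⟩ _; simp
    · rintro ⟨a, b⟩ _; simp
  rw [h1]
  have h2 : ∀ x : Fin n × Fin n,
      (x.1 < x.2 ∧ Fin.revPerm x.2 < Fin.revPerm x.1) ↔ x.1 < x.2 := by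
    intro x
    simp only [Fin.revPerm_apply, Fin.rev_lt_rev, and_self]
  simp only [h2]
  have h3 : ∀ x : Fin n × Fin n, x.1 < x.2 →
      ((u x.1 < u x.2) ↔ ¬ (u x.2 < u x.1)) := by
    intro x hx
    constructor
    · exact fun h h' => absurd (h.trans h') (lt_irrefl _)
    · intro h
      rcases lt_trichotomy (u x.1) (u x.2) with h' | h' | h'
      · exact h'
      · exact absurd (u.injective h') (ne_of_lt hx)
      · exact absurd h' h
  have := Finset.card_filter_add_card_filter_not
    (s := Finset.univ.filter fun x : Fin n × Fin n => x.1 < x.2)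
    (p := fun x => u x.2 < u x.1)
  rw [Finset.filter_filter, Finset.filter_filter] at this
  have e1 : (Finset.univ.filter fun x : Fin n × Fin n => x.1 < x.2 ∧ u x.1 < u x.2) =
      (Finset.univ.filter fun x : Fin n × Fin n => x.1 < x.2 ∧ ¬ u x.2 < u x.1) := by
    apply Finset.filter_congr
    intro x _
    exact and_congr_right fun hx => h3 x hx
  rw [e1, Nat.add_comm]
  convert this using 3

/-- if `ℓ(w) = ℓ(w v⁻¹) + ℓ(v)` then `𝔡_v(𝔰_w) = 𝔰_{w v⁻¹}`. -/
theorem demazure_schubert (k : Type) [Field k] (n : ℕ) (p : Fin n → Bool) (hn : 2 ≤ n)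
    (si : ∀ i : ℕ, i + 1 < n → (PolC k n p →ₐ[k] PolC k n p))
    (hsi : ∀ (i : ℕ) (hi : i + 1 < n), SwapSpec k n p i hi (si i hi))
    (d : ∀ i : ℕ, i + 1 < n → (PolC k n p →ₗ[k] PolC k n p))
    (hd : ∀ (i : ℕ) (hi : i + 1 < n), DemSpec k n p i hi (si i hi) (d i hi))
    (D : Equiv.Perm (Fin n) → (PolC k n p →ₗ[k] PolC k n p))
    (hD : DFamSpec k n p d D)
    (v w : Equiv.Perm (Fin n)) (hlen : len n w = len n (w * v⁻¹) + len n v) :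
    D v (schubert k n p D w) = schubert k n p D (w * v⁻¹) := by
  have hinv : ∀ u : Equiv.Perm (Fin n), len n u⁻¹ = len n u := len_inv_eq n
  have hrev := len_add_len_mul_rev n
  set u : Equiv.Perm (Fin n) := w⁻¹ * Fin.revPerm with hu
  have key : len n (v * u) = len n v + len n u := by
    have e1 : v * u = (v * w⁻¹) * Fin.revPerm := by rw [hu]; group
    have h1 := hrev (v * w⁻¹)
    have h2 := hrev w⁻¹
    rw [← e1] at h1
    rw [← hu] at h2
    have h3 : len n (v * w⁻¹) = len n (w * v⁻¹) := by
      rw [← hinv (v * w⁻¹)]; congr 1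
    have h4 : len n w⁻¹ = len n w := hinv w
    omega
  have hmul := hD.2.2 v u key
  have e2 : (w * v⁻¹)⁻¹ * Fin.revPerm = v * u := by rw [hu]; group
  unfold schubert
  rw [e2, hmul]
  rfl

end
end
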